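/- The Lagrange dual is exactly as tight as the natural LP relaxation: sup_{λ∈Λ} D(λ) = min E(θ, x), where the minimum on the right is taken over all relaxed assignments x in which x_u = (x_det, x_in, x_out) ∈ [0,1] × [0,1]^{In(u)} × [0,1]^{Out(u)} satisfies Σ_{e∈In(u)} x_in(e) ≤ x_det and Σ_{e∈Out(u)} x_out(e) ≤ x_det for every u ∈ V_det, x_c ∈ [0,1]^{c} satisfies Σ_{u∈c} x_c(u) ≤ 1 for every c ∈ V_conf, and all coupling constraints hold. -/

import Mathlib

open Finset

/-- Transition edges: a move `u→v` is `Sum.inl (u, v)`, a division `u→(v, w)` is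
`Sum.inr (u, v, w)`. -/
abbrev Edge (Vdet : Type*) := (Vdet × Vdet) ⊕ (Vdet × Vdet × Vdet)

/-- A detection state `(x_det, x_in, x_out)`: the activation flag is a `Bool`, and each
`{0,1}`-vector is identified with the finite set of coordinates equal to `1`. -/
abbrev DetS (Vdet : Type*) := Bool × Finset (Edge Vdet) × Finset (Edge Vdet)

/-- A tracking decomposition: detection nodes `Vdet`, conflict nodes `Vconf`,
move edges (with distinct endpoints), division edges (with pairwise distinct nodes)
and conflict edges. -/
structure Tracking (Vdet Vconf : Type*) [Fintype Vdet] [DecidableEq Vdet]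
    [Fintype Vconf] [DecidableEq Vconf] where
  Emove : Finset (Vdet × Vdet)
  Ediv : Finset (Vdet × Vdet × Vdet)
  Econf : Finset (Vdet × Vconf)
  move_ne : ∀ e ∈ Emove, e.1 ≠ e.2
  div_ne : ∀ e ∈ Ediv, e.1 ≠ e.2.1 ∧ e.1 ≠ e.2.2 ∧ e.2.1 ≠ e.2.2

/-- A cost vector `θ`. -/
structure Cost (Vdet Vconf : Type*) where
  det : Vdet → ℝ
  inn : Vdet → Edge Vdet → ℝ
  out : Vdet → Edge Vdet → ℝ
  conf : Vconf → Vdet → ℝ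

/-- A reparametrization `λ ∈ Λ`: one real per move edge, a pair of reals
`(λ_v(e), λ_w(e))` per division edge `e = u→(v,w)`, and one real per conflict edge. -/
abbrev Repa (Vdet Vconf : Type*) : Type _ :=
  ((Vdet × Vdet) → ℝ) × ((Vdet × Vdet × Vdet) → ℝ × ℝ) × ((Vdet × Vconf) → ℝ)

variable {Vdet Vconf : Type*} [Fintype Vdet] [DecidableEq Vdet]
  [Fintype Vconf] [DecidableEq Vconf]

namespace Tracking

variable (T : Tracking Vdet Vconf)

/-- The set `In(u)` of incoming transition edges of a detection node `u`. -/
def In (u : Vdet) : Finset (Edge Vdet) :=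
  (T.Emove.filter (fun m => m.2 = u)).image Sum.inl ∪
    (T.Ediv.filter (fun d => d.2.1 = u ∨ d.2.2 = u)).image Sum.inr

/-- The set `Out(u)` of outgoing transition edges of a detection node `u`. -/
def Out (u : Vdet) : Finset (Edge Vdet) :=
  (T.Emove.filter (fun m => m.1 = u)).image Sum.inl ∪
    (T.Ediv.filter (fun d => d.1 = u)).image Sum.inr

/-- The set `conf(u)` of conflict edges incident to a detection node `u`. -/
def confSet (u : Vdet) : Finset (Vdet × Vconf) := T.Econf.filter (fun e => e.1 = u)

/-- The detection nodes `u ∈ c` of a conflict node `c`. -/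
def membersOf (c : Vconf) : Finset Vdet := Finset.univ.filter (fun v => (v, c) ∈ T.Econf)

/-- The state space `X_u` of a detection node. -/
def XDet (u : Vdet) : Finset (DetS Vdet) :=
  Finset.univ.filter (fun s =>
    s.2.1 ⊆ T.In u ∧ s.2.2 ⊆ T.Out u ∧
    s.2.1.card ≤ (if s.1 then 1 else 0) ∧ s.2.2.card ≤ (if s.1 then 1 else 0))

lemma zero_mem_XDet (u : Vdet) : ((false, ∅, ∅) : DetS Vdet) ∈ T.XDet u := by
  simp [XDet]

lemma XDet_nonempty (u : Vdet) : (T.XDet u).Nonempty := ⟨_, T.zero_mem_XDet u⟩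

/-- The state space `X_c` of a conflict node. -/
def XConf (c : Vconf) : Finset (Finset Vdet) :=
  Finset.univ.filter (fun s => (∀ v ∈ s, (v, c) ∈ T.Econf) ∧ s.card ≤ 1)

lemma empty_mem_XConf (c : Vconf) : (∅ : Finset Vdet) ∈ T.XConf c := by
  simp [XConf]

lemma XConf_nonempty (c : Vconf) : (T.XConf c).Nonempty := ⟨_, T.empty_mem_XConf c⟩

end Tracking

/-- The cost `⟨θ_u, x_u⟩` of a detection state. -/
def detCost (θ : Cost Vdet Vconf) (u : Vdet) (s : DetS Vdet) : ℝ :=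
  (if s.1 then θ.det u else 0) + ∑ e ∈ s.2.1, θ.inn u e + ∑ e ∈ s.2.2, θ.out u e

/-- The cost `⟨θ_c, x_c⟩` of a conflict state. -/
def confCost (θ : Cost Vdet Vconf) (c : Vconf) (s : Finset Vdet) : ℝ :=
  ∑ v ∈ s, θ.conf c v

/-- The energy `E(θ, x)`. -/
def energy (θ : Cost Vdet Vconf) (x : Vdet → DetS Vdet) (y : Vconf → Finset Vdet) : ℝ :=
  ∑ u, detCost θ u (x u) + ∑ c, confCost θ c (y c)

namespace Tracking

variable (T : Tracking Vdet Vconf)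

/-- The coupling constraints relating the states of the nodes. -/
def Coupled (x : Vdet → DetS Vdet) (y : Vconf → Finset Vdet) : Prop :=
  (∀ m ∈ T.Emove, (Sum.inl m ∈ (x m.1).2.2 ↔ Sum.inl m ∈ (x m.2).2.1)) ∧
  (∀ d ∈ T.Ediv, (Sum.inr d ∈ (x d.1).2.2 ↔ Sum.inr d ∈ (x d.2.1).2.1) ∧
      (Sum.inr d ∈ (x d.1).2.2 ↔ Sum.inr d ∈ (x d.2.2).2.1)) ∧
  (∀ e ∈ T.Econf, ((x e.1).1 = true ↔ e.1 ∈ y e.2))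

/-- A feasible assignment `x ∈ X`: valid local states satisfying all coupling constraints. -/
def Feasible (x : Vdet → DetS Vdet) (y : Vconf → Finset Vdet) : Prop :=
  (∀ u, x u ∈ T.XDet u) ∧ (∀ c, y c ∈ T.XConf c) ∧ T.Coupled x y

/-- The reparametrized costs `θ^λ`. -/
def repaCost (θ : Cost Vdet Vconf) (l : Repa Vdet Vconf) : Cost Vdet Vconf where
  det u := θ.det u - ∑ e ∈ T.confSet u, l.2.2 e
  inn u e := θ.inn u e +
    (match e with
      | Sum.inl m => l.1 m
      | Sum.inr d =>
          (if d.2.1 = u then (l.2.1 d).1 else 0) + (if d.2.2 = u then (l.2.1 d).2 else 0))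
  out u e := θ.out u e -
    (match e with
      | Sum.inl m => l.1 m
      | Sum.inr d => (l.2.1 d).1 + (l.2.1 d).2)
  conf c u := θ.conf c u + l.2.2 (u, c)

/-- The dual function `D(λ)`. -/
def D (θ : Cost Vdet Vconf) (l : Repa Vdet Vconf) : ℝ :=
  ∑ u, (T.XDet u).inf' (T.XDet_nonempty u) (detCost (T.repaCost θ l) u) +
    ∑ c, (T.XConf c).inf' (T.XConf_nonempty c) (confCost (T.repaCost θ l) c)

/-- The states of `X_u` with active detection variable, `{x ∈ X_u : x_det = 1}`. -/
def XDet1 (u : Vdet) : Finset (DetS Vdet) := (T.XDet u).filter (fun s => s.1 = true)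

lemma one_mem_XDet1 (u : Vdet) : ((true, ∅, ∅) : DetS Vdet) ∈ T.XDet1 u := by
  simp [XDet1, XDet]

lemma XDet1_nonempty (u : Vdet) : (T.XDet1 u).Nonempty := ⟨_, T.one_mem_XDet1 u⟩

/-- The states of `X_u` with a given active outgoing edge, `{x ∈ X_u : x_out(e) = 1}`. -/
def XDetOut (u : Vdet) (e : Edge Vdet) : Finset (DetS Vdet) :=
  (T.XDet u).filter (fun s => e ∈ s.2.2)

lemma XDetOut_nonempty (u : Vdet) (e : Edge Vdet) (he : e ∈ T.Out u) :
    (T.XDetOut u e).Nonempty :=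
  ⟨(true, ∅, {e}), by simp [XDetOut, XDet, Finset.singleton_subset_iff, he]⟩

/-- The states of `X_u` with a given active incoming edge, `{x ∈ X_u : x_in(e) = 1}`. -/
def XDetIn (u : Vdet) (e : Edge Vdet) : Finset (DetS Vdet) :=
  (T.XDet u).filter (fun s => e ∈ s.2.1)

lemma XDetIn_nonempty (u : Vdet) (e : Edge Vdet) (he : e ∈ T.In u) :
    (T.XDetIn u e).Nonempty :=
  ⟨(true, {e}, ∅), by simp [XDetIn, XDet, Finset.singleton_subset_iff, he]⟩

/-- `min{⟨θ_u, x⟩ : x ∈ X_u, x_out(e) = 1}` (by convention `0` if `e ∉ Out(u)`). -/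
def minOutOn (θ : Cost Vdet Vconf) (u : Vdet) (e : Edge Vdet) : ℝ :=
  if h : e ∈ T.Out u then (T.XDetOut u e).inf' (T.XDetOut_nonempty u e h) (detCost θ u) else 0

/-- `min{⟨θ_u, x⟩ : x ∈ X_u, x_in(e) = 1}` (by convention `0` if `e ∉ In(u)`). -/
def minInOn (θ : Cost Vdet Vconf) (u : Vdet) (e : Edge Vdet) : ℝ :=
  if h : e ∈ T.In u then (T.XDetIn u e).inf' (T.XDetIn_nonempty u e h) (detCost θ u) else 0

end Tracking

open Finset Set Pointwise

lemma abstract_duality {n ι : Type*} [Fintype n] [Fintype ι] [DecidableEq ι]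
    (C : Set (n → ℝ)) (hCc : IsCompact C) (hCv : Convex ℝ C)
    (A : (n → ℝ) →ₗ[ℝ] (ι → ℝ)) (c : (n → ℝ) →ₗ[ℝ] ℝ)
    {x0 : n → ℝ} (hx0 : x0 ∈ C) (hAx0 : A x0 = 0)
    (p : ℝ) (hp : ∀ x ∈ C, A x = 0 → p ≤ c x) {ε : ℝ} (hε : 0 < ε) :
    ∃ lam : ι → ℝ, ∀ x ∈ C, p - ε ≤ c x + ∑ i, lam i * A x i := by
  classical
  set Φ : (n → ℝ) →ₗ[ℝ] (ι → ℝ) × ℝ := A.prod c with hΦ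
  have hΦcont : Continuous Φ := Φ.continuous_of_finiteDimensional
  set K : Set ((ι → ℝ) × ℝ) := (Φ '' C) + ({(0 : ι → ℝ)} ×ˢ Ici (0 : ℝ)) with hK
  have hKmem : ∀ y, y ∈ K ↔ ∃ x ∈ C, A x = y.1 ∧ c x ≤ y.2 := by
    intro y
    constructor
    · rintro ⟨a, ⟨x, hx, rfl⟩, b, ⟨hb1, hb2⟩, rfl⟩
      refine ⟨x, hx, ?_, ?_⟩
      · simp only [Set.mem_singleton_iff] at hb1
        simp [hΦ, hb1]
      · simp only [Set.mem_singleton_iff] at hb1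
        simp only [Set.mem_Ici] at hb2
        simp [hΦ]
        linarith [hb2]
    · rintro ⟨x, hx, h1, h2⟩
      refine ⟨Φ x, ⟨x, hx, rfl⟩, (0, y.2 - c x), ⟨rfl, by simpa using h2⟩, ?_⟩
      simp [hΦ, h1]
  have hKcl : IsClosed K := by
    refine IsClosed.add_left_of_isCompact ?_ (hCc.image hΦcont)
    exact (isClosed_singleton).prod isClosed_Ici
  have hKcv : Convex ℝ K :=
    (hCv.linear_image Φ).add ((convex_singleton _).prod (convex_Ici 0))
  have hz : ((0 : ι → ℝ), p - ε) ∉ K := by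
    rw [hKmem]
    rintro ⟨x, hx, h1, h2⟩
    have := hp x hx h1
    simp only at h2
    linarith
  obtain ⟨f, u, hfz, hfK⟩ := geometric_hahn_banach_point_closed hKcv hKcl hz
  set μ : ℝ := f ((0 : ι → ℝ), 1) with hμ
  set lam0 : ι → ℝ := fun i => f (Pi.single i 1, 0) with hlam0
  have hexp : ∀ (v : ι → ℝ) (t : ℝ), f (v, t) = (∑ i, v i * lam0 i) + t * μ := by
    intro v t
    have hv : (v, t) = (∑ i, v i • ((Pi.single i 1 : ι → ℝ), (0:ℝ))) + t • ((0 : ι → ℝ), 1) := by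
      ext j
      · simp only [Prod.fst_add, Prod.fst_sum, Prod.smul_fst, Pi.add_apply, Finset.sum_apply,
          Pi.smul_apply, smul_eq_mul, Pi.single_apply, mul_ite, mul_one, mul_zero, smul_zero,
          Pi.zero_apply, add_zero]
        simp [Finset.sum_ite_eq]
      · simp [Prod.snd_sum]
    rw [hv, map_add, map_sum, map_smul]
    simp only [smul_eq_mul]
    congr 1
    · refine Finset.sum_congr rfl fun i _ => ?_
      rw [map_smul, smul_eq_mul, hlam0]
  have hray : ∀ s : ℝ, 0 ≤ s → u < (c x0 + s) * μ := by
    intro s hs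
    have : ((0 : ι → ℝ), c x0 + s) ∈ K := by
      rw [hKmem]; exact ⟨x0, hx0, by simp [hAx0], by simp; linarith⟩
    have := hfK _ this
    calc u < f ((0 : ι → ℝ), c x0 + s) := this
      _ = (c x0 + s) * μ := by rw [hexp]; simp
  have hzval : (p - ε) * μ < u := by
    have h := hfz
    rw [hexp] at h
    simpa using h
  have hμpos : 0 < μ := by
    rcases lt_trichotomy μ 0 with h | h | h
    · have h1 := hray (max 0 ((u - c x0 * μ) / μ)) (le_max_left _ _)
      have h2 : (c x0 + max 0 ((u - c x0 * μ) / μ)) * μ ≤ u := by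
        have hge : (u - c x0 * μ) / μ ≤ max 0 ((u - c x0 * μ) / μ) := le_max_right _ _
        have := mul_le_mul_of_nonpos_right hge (le_of_lt h)
        rw [div_mul_cancel₀ _ (ne_of_lt h)] at this
        nlinarith
      linarith
    · exfalso
      have h1 := hray 0 le_rfl
      have h2 := hzval
      rw [h] at h1 h2
      simp at h1 h2
      linarith
    · exact h
  refine ⟨fun i => lam0 i / μ, fun x hx => ?_⟩
  have hxK : ((A x), c x) ∈ K := by rw [hKmem]; exact ⟨x, hx, rfl, le_rfl⟩
  have h1 : u < (∑ i, A x i * lam0 i) + c x * μ := by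
    have := hfK _ hxK
    rwa [hexp] at this
  have h2 : (p - ε) * μ < (∑ i, A x i * lam0 i) + c x * μ := lt_trans hzval h1
  have hsum : ∑ i, (lam0 i / μ) * A x i = (∑ i, A x i * lam0 i) / μ := by
    rw [Finset.sum_div]
    refine Finset.sum_congr rfl fun i _ => by ring
  rw [hsum]
  by_contra hcon
  push_neg at hcon
  have hmul := mul_lt_mul_of_pos_right hcon hμpos
  rw [add_mul, div_mul_cancel₀ _ (ne_of_gt hμpos)] at hmul
  linarith
section Sums
variable {Vdet Vconf : Type*} [Fintype Vdet] [DecidableEq Vdet]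
  [Fintype Vconf] [DecidableEq Vconf] (T : Tracking Vdet Vconf)

lemma sum_In_eq (g : Vdet → Edge Vdet → ℝ) :
    ∑ u, ∑ e ∈ T.In u, g u e =
      ∑ m ∈ T.Emove, g m.2 (Sum.inl m) +
        ∑ d ∈ T.Ediv, (g d.2.1 (Sum.inr d) + g d.2.2 (Sum.inr d)) := by
  classical
  have hIn : ∀ u, ∑ e ∈ T.In u, g u e =
      ∑ m ∈ T.Emove.filter (fun m => m.2 = u), g u (Sum.inl m) +
        ∑ d ∈ T.Ediv.filter (fun d => d.2.1 = u ∨ d.2.2 = u), g u (Sum.inr d) := by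
    intro u
    rw [Tracking.In, Finset.sum_union (by simp [Finset.disjoint_left]),
      Finset.sum_image (fun a _ b _ h => Sum.inl.inj h),
      Finset.sum_image (fun a _ b _ h => Sum.inr.inj h)]
  simp_rw [hIn]
  rw [Finset.sum_add_distrib]
  congr 1
  · rw [← Finset.sum_fiberwise T.Emove (fun m => m.2) (fun m => g m.2 (Sum.inl m))]
    refine Finset.sum_congr rfl fun u _ => Finset.sum_congr rfl fun m hm => ?_
    rw [(Finset.mem_filter.1 hm).2]
  · have hsplit : ∀ u, T.Ediv.filter (fun d => d.2.1 = u ∨ d.2.2 = u) =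
        T.Ediv.filter (fun d => d.2.1 = u) ∪ T.Ediv.filter (fun d => d.2.2 = u) := by
      intro u; rw [← Finset.filter_or]
    have hdisj : ∀ u, Disjoint (T.Ediv.filter (fun d => d.2.1 = u))
        (T.Ediv.filter (fun d => d.2.2 = u)) := by
      intro u
      rw [Finset.disjoint_filter]
      intro d hd h1 h2
      exact (T.div_ne d hd).2.2 (h1.trans h2.symm)
    simp_rw [fun u => hsplit u]
    have : ∀ u, ∑ d ∈ (T.Ediv.filter (fun d => d.2.1 = u) ∪ T.Ediv.filter (fun d => d.2.2 = u)),
        g u (Sum.inr d) = ∑ d ∈ T.Ediv.filter (fun d => d.2.1 = u), g u (Sum.inr d) +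
          ∑ d ∈ T.Ediv.filter (fun d => d.2.2 = u), g u (Sum.inr d) := by
      intro u; exact Finset.sum_union (hdisj u)
    simp_rw [this]
    rw [Finset.sum_add_distrib, Finset.sum_add_distrib]
    congr 1
    · rw [← Finset.sum_fiberwise T.Ediv (fun d => d.2.1) (fun d => g d.2.1 (Sum.inr d))]
      refine Finset.sum_congr rfl fun u _ => Finset.sum_congr rfl fun d hd => ?_
      rw [(Finset.mem_filter.1 hd).2]
    · rw [← Finset.sum_fiberwise T.Ediv (fun d => d.2.2) (fun d => g d.2.2 (Sum.inr d))]
      refine Finset.sum_congr rfl fun u _ => Finset.sum_congr rfl fun d hd => ?_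
      rw [(Finset.mem_filter.1 hd).2]

lemma sum_Out_eq (g : Vdet → Edge Vdet → ℝ) :
    ∑ u, ∑ e ∈ T.Out u, g u e =
      ∑ m ∈ T.Emove, g m.1 (Sum.inl m) + ∑ d ∈ T.Ediv, g d.1 (Sum.inr d) := by
  classical
  have hOut : ∀ u, ∑ e ∈ T.Out u, g u e =
      ∑ m ∈ T.Emove.filter (fun m => m.1 = u), g u (Sum.inl m) +
        ∑ d ∈ T.Ediv.filter (fun d => d.1 = u), g u (Sum.inr d) := by
    intro u
    rw [Tracking.Out, Finset.sum_union (by simp [Finset.disjoint_left]),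
      Finset.sum_image (fun a _ b _ h => Sum.inl.inj h),
      Finset.sum_image (fun a _ b _ h => Sum.inr.inj h)]
  simp_rw [hOut]
  rw [Finset.sum_add_distrib]
  congr 1
  · rw [← Finset.sum_fiberwise T.Emove (fun m => m.1) (fun m => g m.1 (Sum.inl m))]
    refine Finset.sum_congr rfl fun u _ => Finset.sum_congr rfl fun m hm => ?_
    rw [(Finset.mem_filter.1 hm).2]
  · rw [← Finset.sum_fiberwise T.Ediv (fun d => d.1) (fun d => g d.1 (Sum.inr d))]
    refine Finset.sum_congr rfl fun u _ => Finset.sum_congr rfl fun d hd => ?_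
    rw [(Finset.mem_filter.1 hd).2]

lemma sum_confSet_eq (g : Vdet × Vconf → ℝ) :
    ∑ u, ∑ e ∈ T.confSet u, g e = ∑ e ∈ T.Econf, g e := by
  classical
  rw [← Finset.sum_fiberwise T.Econf (fun e => e.1) g]
  rfl

lemma sum_members_eq (g : Vdet × Vconf → ℝ) :
    ∑ c, ∑ v ∈ T.membersOf c, g (v, c) = ∑ e ∈ T.Econf, g e := by
  classical
  have h1 : ∀ c, ∑ v ∈ T.membersOf c, g (v, c) =
      ∑ v, (if (v, c) ∈ T.Econf then g (v, c) else 0) := by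
    intro c
    rw [Tracking.membersOf, Finset.sum_filter]
  simp_rw [h1]
  rw [Finset.sum_comm]
  have h2 : (∑ v, ∑ c, if (v, c) ∈ T.Econf then g (v, c) else 0)
      = ∑ e : Vdet × Vconf, (if e ∈ T.Econf then g e else 0) :=
    (Fintype.sum_prod_type (f := fun e : Vdet × Vconf => if e ∈ T.Econf then g e else 0)).symm
  rw [h2, Finset.sum_ite_mem, Finset.univ_inter]
end Sums
section Lower
variable {Vdet Vconf : Type*} [Fintype Vdet] [DecidableEq Vdet]
  [Fintype Vconf] [DecidableEq Vconf] (T : Tracking Vdet Vconf)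

lemma choose_neg_part (s : Finset (Edge Vdet)) (f : Edge Vdet → ℝ) (xd : ℝ) (x : Edge Vdet → ℝ)
    (hx : ∀ e ∈ s, 0 ≤ x e) (hsum : ∑ e ∈ s, x e ≤ xd) (hxd : 0 ≤ xd) :
    ∃ (t : Finset (Edge Vdet)) (a : ℝ), t ⊆ s ∧ t.card ≤ 1 ∧ (∑ e ∈ t, f e) = a ∧ a ≤ 0 ∧
      a * xd ≤ ∑ e ∈ s, f e * x e := by
  classical
  by_cases h : ∃ e ∈ s, f e < 0
  · have hs : s.Nonempty := by obtain ⟨e, he, _⟩ := h; exact ⟨e, he⟩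
    obtain ⟨e₀, he₀, hmin⟩ := Finset.exists_mem_eq_inf' hs f
    have ha : f e₀ ≤ 0 := by
      obtain ⟨e, he, hfe⟩ := h
      calc f e₀ = s.inf' hs f := hmin.symm
        _ ≤ f e := Finset.inf'_le f he
        _ ≤ 0 := le_of_lt hfe
    refine ⟨{e₀}, f e₀, Finset.singleton_subset_iff.2 he₀, by simp, by simp, ha, ?_⟩
    have h1 : ∀ e ∈ s, f e₀ * x e ≤ f e * x e := by
      intro e he
      refine mul_le_mul_of_nonneg_right ?_ (hx e he)
      calc f e₀ = s.inf' hs f := hmin.symm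
        _ ≤ f e := Finset.inf'_le f he
    calc f e₀ * xd ≤ f e₀ * (∑ e ∈ s, x e) :=
          mul_le_mul_of_nonpos_left hsum ha
      _ = ∑ e ∈ s, f e₀ * x e := by rw [Finset.mul_sum]
      _ ≤ ∑ e ∈ s, f e * x e := Finset.sum_le_sum h1
  · push_neg at h
    refine ⟨∅, 0, Finset.empty_subset s, by simp, by simp, le_rfl, ?_⟩
    rw [zero_mul]
    exact Finset.sum_nonneg fun e he => mul_nonneg (h e he) (hx e he)

lemma det_lower (η : Cost Vdet Vconf) (u : Vdet) (xd : ℝ) (xin xout : Edge Vdet → ℝ)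
    (h0 : 0 ≤ xd) (h1 : xd ≤ 1)
    (hin : ∀ e ∈ T.In u, 0 ≤ xin e) (hout : ∀ e ∈ T.Out u, 0 ≤ xout e)
    (hsi : ∑ e ∈ T.In u, xin e ≤ xd) (hso : ∑ e ∈ T.Out u, xout e ≤ xd) :
    (T.XDet u).inf' (T.XDet_nonempty u) (detCost η u) ≤
      η.det u * xd + ∑ e ∈ T.In u, η.inn u e * xin e + ∑ e ∈ T.Out u, η.out u e * xout e := by
  classical
  obtain ⟨tA, a, hA1, hA2, hA3, hA4, hA5⟩ :=
    choose_neg_part (T.In u) (η.inn u) xd xin hin hsi h0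
  obtain ⟨tB, b, hB1, hB2, hB3, hB4, hB5⟩ :=
    choose_neg_part (T.Out u) (η.out u) xd xout hout hso h0
  have hmem : ((true, tA, tB) : DetS Vdet) ∈ T.XDet u := by
    simp only [Tracking.XDet, Finset.mem_filter, Finset.mem_univ, true_and]
    exact ⟨hA1, hB1, by simpa using hA2, by simpa using hB2⟩
  have hc1 : (T.XDet u).inf' (T.XDet_nonempty u) (detCost η u) ≤ η.det u + a + b := by
    have := Finset.inf'_le (detCost η u) hmem
    exact this.trans (le_of_eq (by simp [detCost, hA3, hB3, add_assoc]))
  have hc0 : (T.XDet u).inf' (T.XDet_nonempty u) (detCost η u) ≤ 0 := by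
    have := Finset.inf'_le (detCost η u) (T.zero_mem_XDet u)
    exact this.trans (le_of_eq (by simp [detCost]))
  rcases le_total 0 (η.det u + a + b) with hs | hs
  · have : 0 ≤ (η.det u + a + b) * xd := mul_nonneg hs h0
    nlinarith [hA5, hB5]
  · have h2 : (η.det u + a + b) * 1 ≤ (η.det u + a + b) * xd :=
      mul_le_mul_of_nonpos_left h1 hs
    nlinarith [hA5, hB5]

lemma conf_lower (η : Cost Vdet Vconf) (c : Vconf) (y : Vdet → ℝ)
    (hy : ∀ v ∈ T.membersOf c, 0 ≤ y v) (hsum : ∑ v ∈ T.membersOf c, y v ≤ 1) :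
    (T.XConf c).inf' (T.XConf_nonempty c) (confCost η c) ≤
      ∑ v ∈ T.membersOf c, η.conf c v * y v := by
  classical
  by_cases h : ∃ v ∈ T.membersOf c, η.conf c v < 0
  · have hs : (T.membersOf c).Nonempty := by obtain ⟨v, hv, _⟩ := h; exact ⟨v, hv⟩
    obtain ⟨v₀, hv₀, hmin⟩ := Finset.exists_mem_eq_inf' hs (η.conf c)
    have ha : η.conf c v₀ ≤ 0 := by
      obtain ⟨v, hv, hfv⟩ := h
      calc η.conf c v₀ = (T.membersOf c).inf' hs (η.conf c) := hmin.symm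
        _ ≤ η.conf c v := Finset.inf'_le _ hv
        _ ≤ 0 := le_of_lt hfv
    have hmem : ({v₀} : Finset Vdet) ∈ T.XConf c := by
      simp only [Tracking.XConf, Finset.mem_filter, Finset.mem_univ, true_and]
      constructor
      · intro v hv
        rw [Finset.mem_singleton] at hv
        subst hv
        have := hv₀
        rw [Tracking.membersOf, Finset.mem_filter] at this
        exact this.2
      · simp
    have hc1 : (T.XConf c).inf' (T.XConf_nonempty c) (confCost η c) ≤ η.conf c v₀ := by
      have := Finset.inf'_le (confCost η c) hmem
      exact this.trans (le_of_eq (by simp [confCost]))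
    have h1 : ∀ v ∈ T.membersOf c, η.conf c v₀ * y v ≤ η.conf c v * y v := by
      intro v hv
      refine mul_le_mul_of_nonneg_right ?_ (hy v hv)
      calc η.conf c v₀ = (T.membersOf c).inf' hs (η.conf c) := hmin.symm
        _ ≤ η.conf c v := Finset.inf'_le _ hv
    calc (T.XConf c).inf' (T.XConf_nonempty c) (confCost η c) ≤ η.conf c v₀ := hc1
      _ ≤ η.conf c v₀ * (∑ v ∈ T.membersOf c, y v) := by nlinarith
      _ = ∑ v ∈ T.membersOf c, η.conf c v₀ * y v := by rw [Finset.mul_sum]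
      _ ≤ ∑ v ∈ T.membersOf c, η.conf c v * y v := Finset.sum_le_sum h1
  · push_neg at h
    have hc0 : (T.XConf c).inf' (T.XConf_nonempty c) (confCost η c) ≤ 0 := by
      have := Finset.inf'_le (confCost η c) (T.empty_mem_XConf c)
      exact this.trans (le_of_eq (by simp [confCost]))
    exact hc0.trans (Finset.sum_nonneg fun v hv => mul_nonneg (h v hv) (hy v hv))
end Lower
section Decomp
variable {Vdet Vconf : Type*} [Fintype Vdet] [DecidableEq Vdet]
  [Fintype Vconf] [DecidableEq Vconf] (T : Tracking Vdet Vconf)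

/-- The total objective decomposes as original objective plus λ-weighted residuals. -/
lemma decomp (θ : Cost Vdet Vconf) (l : Repa Vdet Vconf)
    (xd : Vdet → ℝ) (xin xout : Vdet → Edge Vdet → ℝ) (yc : Vconf → Vdet → ℝ) :
    (∑ u, ((T.repaCost θ l).det u * xd u + ∑ e ∈ T.In u, (T.repaCost θ l).inn u e * xin u e
        + ∑ e ∈ T.Out u, (T.repaCost θ l).out u e * xout u e)
      + ∑ c, ∑ v ∈ T.membersOf c, (T.repaCost θ l).conf c v * yc c v)
    = (∑ u, (θ.det u * xd u + ∑ e ∈ T.In u, θ.inn u e * xin u e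
          + ∑ e ∈ T.Out u, θ.out u e * xout u e)
        + ∑ c, ∑ v ∈ T.membersOf c, θ.conf c v * yc c v)
      + (∑ m ∈ T.Emove, l.1 m * (xin m.2 (Sum.inl m) - xout m.1 (Sum.inl m))
        + ∑ d ∈ T.Ediv, ((l.2.1 d).1 * (xin d.2.1 (Sum.inr d) - xout d.1 (Sum.inr d))
            + (l.2.1 d).2 * (xin d.2.2 (Sum.inr d) - xout d.1 (Sum.inr d)))
        + ∑ e ∈ T.Econf, l.2.2 e * (yc e.2 e.1 - xd e.1)) := by
  classical
  -- det part
  have hdet : ∑ u, (T.repaCost θ l).det u * xd u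
      = ∑ u, θ.det u * xd u - ∑ e ∈ T.Econf, l.2.2 e * xd e.1 := by
    have h1 : ∀ u, (T.repaCost θ l).det u * xd u
        = θ.det u * xd u - ∑ e ∈ T.confSet u, l.2.2 e * xd e.1 := by
      intro u
      have : ∑ e ∈ T.confSet u, l.2.2 e * xd e.1 = ∑ e ∈ T.confSet u, l.2.2 e * xd u := by
        refine Finset.sum_congr rfl fun e he => ?_
        rw [Tracking.confSet, Finset.mem_filter] at he
        rw [he.2]
      rw [this, ← Finset.sum_mul, Tracking.repaCost]
      ring
    simp_rw [h1]
    rw [Finset.sum_sub_distrib, sum_confSet_eq T (fun e => l.2.2 e * xd e.1)]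
  -- conf part
  have hconf : ∑ c, ∑ v ∈ T.membersOf c, (T.repaCost θ l).conf c v * yc c v
      = ∑ c, ∑ v ∈ T.membersOf c, θ.conf c v * yc c v
        + ∑ e ∈ T.Econf, l.2.2 e * yc e.2 e.1 := by
    have h1 : ∀ c, ∀ v ∈ T.membersOf c, (T.repaCost θ l).conf c v * yc c v
        = θ.conf c v * yc c v + l.2.2 (v, c) * yc c v := by
      intro c v _
      rw [Tracking.repaCost]
      ring
    have h2 : ∑ c, ∑ v ∈ T.membersOf c, (T.repaCost θ l).conf c v * yc c v
        = ∑ c, (∑ v ∈ T.membersOf c, θ.conf c v * yc c v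
            + ∑ v ∈ T.membersOf c, l.2.2 (v, c) * yc c v) := by
      refine Finset.sum_congr rfl fun c _ => ?_
      rw [← Finset.sum_add_distrib]
      exact Finset.sum_congr rfl (h1 c)
    rw [h2, Finset.sum_add_distrib, sum_members_eq T (fun e => l.2.2 e * yc e.2 e.1)]
  -- in part
  have hinn : ∑ u, ∑ e ∈ T.In u, (T.repaCost θ l).inn u e * xin u e
      = ∑ u, ∑ e ∈ T.In u, θ.inn u e * xin u e
        + (∑ m ∈ T.Emove, l.1 m * xin m.2 (Sum.inl m)
          + ∑ d ∈ T.Ediv, ((l.2.1 d).1 * xin d.2.1 (Sum.inr d)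
              + (l.2.1 d).2 * xin d.2.2 (Sum.inr d))) := by
    have h1 : ∀ u, ∀ e ∈ T.In u, (T.repaCost θ l).inn u e * xin u e
        = θ.inn u e * xin u e +
          (match e with
            | Sum.inl m => l.1 m
            | Sum.inr d => (if d.2.1 = u then (l.2.1 d).1 else 0)
                + (if d.2.2 = u then (l.2.1 d).2 else 0)) * xin u e := by
      intro u e _
      rw [Tracking.repaCost]
      ring
    have h2 : ∑ u, ∑ e ∈ T.In u, (T.repaCost θ l).inn u e * xin u e
        = ∑ u, ∑ e ∈ T.In u, θ.inn u e * xin u e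
          + ∑ u, ∑ e ∈ T.In u, (match e with
            | Sum.inl m => l.1 m
            | Sum.inr d => (if d.2.1 = u then (l.2.1 d).1 else 0)
                + (if d.2.2 = u then (l.2.1 d).2 else 0)) * xin u e := by
      rw [← Finset.sum_add_distrib]
      refine Finset.sum_congr rfl fun u _ => ?_
      rw [← Finset.sum_add_distrib]
      exact Finset.sum_congr rfl (h1 u)
    rw [h2]
    congr 1
    rw [sum_In_eq T (fun u e => (match e with
      | Sum.inl m => l.1 m
      | Sum.inr d => (if d.2.1 = u then (l.2.1 d).1 else 0)
          + (if d.2.2 = u then (l.2.1 d).2 else 0)) * xin u e)]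
    congr 1
    refine Finset.sum_congr rfl fun d hd => ?_
    obtain ⟨_, _, hne⟩ := T.div_ne d hd
    simp only [if_pos rfl, if_neg hne, if_neg (Ne.symm hne), if_true]
    ring
  -- out part
  have hout : ∑ u, ∑ e ∈ T.Out u, (T.repaCost θ l).out u e * xout u e
      = ∑ u, ∑ e ∈ T.Out u, θ.out u e * xout u e
        - (∑ m ∈ T.Emove, l.1 m * xout m.1 (Sum.inl m)
          + ∑ d ∈ T.Ediv, ((l.2.1 d).1 + (l.2.1 d).2) * xout d.1 (Sum.inr d)) := by
    have h1 : ∀ u, ∀ e ∈ T.Out u, (T.repaCost θ l).out u e * xout u e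
        = θ.out u e * xout u e -
          (match e with
            | Sum.inl m => l.1 m
            | Sum.inr d => (l.2.1 d).1 + (l.2.1 d).2) * xout u e := by
      intro u e _
      rw [Tracking.repaCost]
      ring
    have h2 : ∑ u, ∑ e ∈ T.Out u, (T.repaCost θ l).out u e * xout u e
        = ∑ u, ∑ e ∈ T.Out u, θ.out u e * xout u e
          - ∑ u, ∑ e ∈ T.Out u, (match e with
            | Sum.inl m => l.1 m
            | Sum.inr d => (l.2.1 d).1 + (l.2.1 d).2) * xout u e := by
      rw [← Finset.sum_sub_distrib]
      refine Finset.sum_congr rfl fun u _ => ?_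
      rw [← Finset.sum_sub_distrib]
      exact Finset.sum_congr rfl (h1 u)
    rw [h2]
    congr 1
    rw [sum_Out_eq T (fun u e => (match e with
      | Sum.inl m => l.1 m
      | Sum.inr d => (l.2.1 d).1 + (l.2.1 d).2) * xout u e)]
  -- residual rearrangements
  have hres1 : ∑ m ∈ T.Emove, l.1 m * (xin m.2 (Sum.inl m) - xout m.1 (Sum.inl m))
      = ∑ m ∈ T.Emove, l.1 m * xin m.2 (Sum.inl m)
        - ∑ m ∈ T.Emove, l.1 m * xout m.1 (Sum.inl m) := by
    rw [← Finset.sum_sub_distrib]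
    exact Finset.sum_congr rfl fun m _ => by ring
  have hres2 : ∑ d ∈ T.Ediv, ((l.2.1 d).1 * (xin d.2.1 (Sum.inr d) - xout d.1 (Sum.inr d))
        + (l.2.1 d).2 * (xin d.2.2 (Sum.inr d) - xout d.1 (Sum.inr d)))
      = ∑ d ∈ T.Ediv, ((l.2.1 d).1 * xin d.2.1 (Sum.inr d) + (l.2.1 d).2 * xin d.2.2 (Sum.inr d))
        - ∑ d ∈ T.Ediv, ((l.2.1 d).1 + (l.2.1 d).2) * xout d.1 (Sum.inr d) := by
    rw [← Finset.sum_sub_distrib]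
    exact Finset.sum_congr rfl fun d _ => by ring
  have hres3 : ∑ e ∈ T.Econf, l.2.2 e * (yc e.2 e.1 - xd e.1)
      = ∑ e ∈ T.Econf, l.2.2 e * yc e.2 e.1 - ∑ e ∈ T.Econf, l.2.2 e * xd e.1 := by
    rw [← Finset.sum_sub_distrib]
    exact Finset.sum_congr rfl fun e _ => by ring
  have hsplit : ∑ u, ((T.repaCost θ l).det u * xd u
        + ∑ e ∈ T.In u, (T.repaCost θ l).inn u e * xin u e
        + ∑ e ∈ T.Out u, (T.repaCost θ l).out u e * xout u e)
      = ∑ u, (T.repaCost θ l).det u * xd u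
        + ∑ u, ∑ e ∈ T.In u, (T.repaCost θ l).inn u e * xin u e
        + ∑ u, ∑ e ∈ T.Out u, (T.repaCost θ l).out u e * xout u e := by
    rw [Finset.sum_add_distrib, Finset.sum_add_distrib]
  have hsplit' : ∑ u, (θ.det u * xd u + ∑ e ∈ T.In u, θ.inn u e * xin u e
        + ∑ e ∈ T.Out u, θ.out u e * xout u e)
      = ∑ u, θ.det u * xd u + ∑ u, ∑ e ∈ T.In u, θ.inn u e * xin u e
        + ∑ u, ∑ e ∈ T.Out u, θ.out u e * xout u e := by
    rw [Finset.sum_add_distrib, Finset.sum_add_distrib]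
  rw [hsplit, hsplit', hdet, hinn, hout, hconf, hres1, hres2, hres3]
  ring
end Decomp
section Infra
variable {Vdet Vconf : Type*} [Fintype Vdet] [DecidableEq Vdet]
  [Fintype Vconf] [DecidableEq Vconf]

/-- LP variable index type. -/
abbrev NIdx (Vdet Vconf : Type*) : Type _ :=
  Vdet ⊕ ((Vdet × Edge Vdet) ⊕ ((Vdet × Edge Vdet) ⊕ (Vconf × Vdet)))

/-- Multiplier index type. -/
abbrev IIdx (Vdet Vconf : Type*) : Type _ :=
  (Vdet × Vdet) ⊕ ((Vdet × Vdet × Vdet) ⊕ ((Vdet × Vdet × Vdet) ⊕ (Vdet × Vconf)))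

def zd (z : NIdx Vdet Vconf → ℝ) (u : Vdet) : ℝ := z (Sum.inl u)
def zin (z : NIdx Vdet Vconf → ℝ) (u : Vdet) (e : Edge Vdet) : ℝ := z (Sum.inr (Sum.inl (u, e)))
def zout (z : NIdx Vdet Vconf → ℝ) (u : Vdet) (e : Edge Vdet) : ℝ :=
  z (Sum.inr (Sum.inr (Sum.inl (u, e))))
def zyc (z : NIdx Vdet Vconf → ℝ) (c : Vconf) (v : Vdet) : ℝ :=
  z (Sum.inr (Sum.inr (Sum.inr (c, v))))

variable (T : Tracking Vdet Vconf)

/-- The residual map. -/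
def Afun (z : NIdx Vdet Vconf → ℝ) : IIdx Vdet Vconf → ℝ := fun i =>
  match i with
  | Sum.inl m => if m ∈ T.Emove then zin z m.2 (Sum.inl m) - zout z m.1 (Sum.inl m) else 0
  | Sum.inr (Sum.inl d) =>
      if d ∈ T.Ediv then zin z d.2.1 (Sum.inr d) - zout z d.1 (Sum.inr d) else 0
  | Sum.inr (Sum.inr (Sum.inl d)) =>
      if d ∈ T.Ediv then zin z d.2.2 (Sum.inr d) - zout z d.1 (Sum.inr d) else 0
  | Sum.inr (Sum.inr (Sum.inr e)) => if e ∈ T.Econf then zyc z e.2 e.1 - zd z e.1 else 0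

def Amap : (NIdx Vdet Vconf → ℝ) →ₗ[ℝ] (IIdx Vdet Vconf → ℝ) where
  toFun := Afun T
  map_add' x y := by
    funext i
    rcases i with m | d | d | e <;>
      simp only [Afun, zin, zout, zd, zyc, Pi.add_apply] <;> split_ifs <;> ring
  map_smul' a x := by
    funext i
    rcases i with m | d | d | e <;>
      simp only [Afun, zin, zout, zd, zyc, Pi.smul_apply, smul_eq_mul, RingHom.id_apply] <;>
      split_ifs <;> ring

def cfun (θ : Cost Vdet Vconf) (z : NIdx Vdet Vconf → ℝ) : ℝ :=
  ∑ u, (θ.det u * zd z u + ∑ e ∈ T.In u, θ.inn u e * zin z u e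
      + ∑ e ∈ T.Out u, θ.out u e * zout z u e)
    + ∑ c, ∑ v ∈ T.membersOf c, θ.conf c v * zyc z c v

def cmap (θ : Cost Vdet Vconf) : (NIdx Vdet Vconf → ℝ) →ₗ[ℝ] ℝ where
  toFun := cfun T θ
  map_add' x y := by
    simp only [cfun, zd, zin, zout, zyc, Pi.add_apply, mul_add, Finset.sum_add_distrib]
    ring
  map_smul' a x := by
    simp only [cfun, zd, zin, zout, zyc, Pi.smul_apply, smul_eq_mul, RingHom.id_apply]
    rw [mul_add, Finset.mul_sum, Finset.mul_sum]
    congr 1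
    · refine Finset.sum_congr rfl fun u _ => ?_
      rw [mul_add, mul_add, Finset.mul_sum, Finset.mul_sum]
      congr 1
      · congr 1
        · ring
        · exact Finset.sum_congr rfl fun e _ => by ring
      · exact Finset.sum_congr rfl fun e _ => by ring
    · refine Finset.sum_congr rfl fun c _ => ?_
      rw [Finset.mul_sum]
      exact Finset.sum_congr rfl fun v _ => by ring

/-- The fractional local polytope. -/
def Cset : Set (NIdx Vdet Vconf → ℝ) :=
  {z | (∀ i, 0 ≤ z i ∧ z i ≤ 1) ∧ (∀ u, ∑ e ∈ T.In u, zin z u e ≤ zd z u) ∧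
    (∀ u, ∑ e ∈ T.Out u, zout z u e ≤ zd z u) ∧ (∀ c, ∑ v ∈ T.membersOf c, zyc z c v ≤ 1)}

lemma zero_mem_Cset : (0 : NIdx Vdet Vconf → ℝ) ∈ Cset T := by
  refine ⟨fun i => by norm_num, fun u => ?_, fun u => ?_, fun c => ?_⟩ <;>
    simp [zin, zout, zyc, zd]

lemma isClosed_Cset : IsClosed (Cset T) := by
  have h : Cset T = (⋂ i, {z : NIdx Vdet Vconf → ℝ | 0 ≤ z i ∧ z i ≤ 1}) ∩
      ((⋂ u, {z | ∑ e ∈ T.In u, zin z u e ≤ zd z u}) ∩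
        ((⋂ u, {z | ∑ e ∈ T.Out u, zout z u e ≤ zd z u}) ∩
          (⋂ c, {z | ∑ v ∈ T.membersOf c, zyc z c v ≤ 1}))) := by
    ext z
    simp only [Cset, Set.mem_setOf_eq, Set.mem_inter_iff, Set.mem_iInter]
  rw [h]
  refine IsClosed.inter (isClosed_iInter fun i => ?_)
    (IsClosed.inter (isClosed_iInter fun u => ?_)
      (IsClosed.inter (isClosed_iInter fun u => ?_) (isClosed_iInter fun c => ?_)))
  · exact (isClosed_le continuous_const (continuous_apply i)).inter
      (isClosed_le (continuous_apply i) continuous_const)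
  · exact isClosed_le (continuous_finset_sum _ fun e _ => continuous_apply _)
      (continuous_apply _)
  · exact isClosed_le (continuous_finset_sum _ fun e _ => continuous_apply _)
      (continuous_apply _)
  · exact isClosed_le (continuous_finset_sum _ fun v _ => continuous_apply _) continuous_const

lemma convex_Cset : Convex ℝ (Cset T) := by
  rintro x ⟨hx1, hx2, hx3, hx4⟩ y ⟨hy1, hy2, hy3, hy4⟩ a b ha hb hab
  have hcoord : ∀ i, (a • x + b • y) i = a * x i + b * y i := fun i => by
    simp [Pi.add_apply, Pi.smul_apply, smul_eq_mul]
  refine ⟨fun i => ?_, fun u => ?_, fun u => ?_, fun c => ?_⟩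
  · rw [hcoord]
    constructor
    · exact add_nonneg (mul_nonneg ha (hx1 i).1) (mul_nonneg hb (hy1 i).1)
    · nlinarith [mul_nonneg ha (sub_nonneg.mpr (hx1 i).2), mul_nonneg hb (sub_nonneg.mpr (hy1 i).2)]
  · have : ∑ e ∈ T.In u, zin (a • x + b • y) u e
        = a * ∑ e ∈ T.In u, zin x u e + b * ∑ e ∈ T.In u, zin y u e := by
      rw [Finset.mul_sum, Finset.mul_sum, ← Finset.sum_add_distrib]
      exact Finset.sum_congr rfl fun e _ => by rw [zin, hcoord]; rfl
    rw [this, zd, hcoord]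
    exact add_le_add (mul_le_mul_of_nonneg_left (hx2 u) ha) (mul_le_mul_of_nonneg_left (hy2 u) hb)
  · have : ∑ e ∈ T.Out u, zout (a • x + b • y) u e
        = a * ∑ e ∈ T.Out u, zout x u e + b * ∑ e ∈ T.Out u, zout y u e := by
      rw [Finset.mul_sum, Finset.mul_sum, ← Finset.sum_add_distrib]
      exact Finset.sum_congr rfl fun e _ => by rw [zout, hcoord]; rfl
    rw [this, zd, hcoord]
    exact add_le_add (mul_le_mul_of_nonneg_left (hx3 u) ha) (mul_le_mul_of_nonneg_left (hy3 u) hb)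
  · have : ∑ v ∈ T.membersOf c, zyc (a • x + b • y) c v
        = a * ∑ v ∈ T.membersOf c, zyc x c v + b * ∑ v ∈ T.membersOf c, zyc y c v := by
      rw [Finset.mul_sum, Finset.mul_sum, ← Finset.sum_add_distrib]
      exact Finset.sum_congr rfl fun v _ => by rw [zyc, hcoord]; rfl
    rw [this]
    calc a * ∑ v ∈ T.membersOf c, zyc x c v + b * ∑ v ∈ T.membersOf c, zyc y c v
        ≤ a * 1 + b * 1 :=
          add_le_add (mul_le_mul_of_nonneg_left (hx4 c) ha) (mul_le_mul_of_nonneg_left (hy4 c) hb)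
      _ = 1 := by rw [mul_one, mul_one, hab]

lemma isCompact_Cset : IsCompact (Cset T) := by
  refine IsCompact.of_isClosed_subset (isCompact_Icc (a := (0 : NIdx Vdet Vconf → ℝ)) (b := 1))
    (isClosed_Cset T) ?_
  rintro z ⟨hz1, _, _, _⟩
  constructor
  · intro i; exact (hz1 i).1
  · intro i; exact (hz1 i).2

/-- indicator embedding of integral states. -/
def indZ (s : Vdet → DetS Vdet) (t : Vconf → Finset Vdet) : NIdx Vdet Vconf → ℝ
  | Sum.inl u => if (s u).1 then 1 else 0
  | Sum.inr (Sum.inl p) => if p.2 ∈ (s p.1).2.1 then 1 else 0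
  | Sum.inr (Sum.inr (Sum.inl p)) => if p.2 ∈ (s p.1).2.2 then 1 else 0
  | Sum.inr (Sum.inr (Sum.inr q)) => if q.2 ∈ t q.1 then 1 else 0

lemma zd_indZ (s : Vdet → DetS Vdet) (t : Vconf → Finset Vdet) (u : Vdet) :
    zd (Vconf := Vconf) (indZ s t) u = if (s u).1 then 1 else 0 := rfl
lemma zin_indZ (s : Vdet → DetS Vdet) (t : Vconf → Finset Vdet) (u : Vdet) (e : Edge Vdet) :
    zin (Vconf := Vconf) (indZ s t) u e = if e ∈ (s u).2.1 then 1 else 0 := rfl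
lemma zout_indZ (s : Vdet → DetS Vdet) (t : Vconf → Finset Vdet) (u : Vdet) (e : Edge Vdet) :
    zout (Vconf := Vconf) (indZ s t) u e = if e ∈ (s u).2.2 then 1 else 0 := rfl
lemma zyc_indZ (s : Vdet → DetS Vdet) (t : Vconf → Finset Vdet) (c : Vconf) (v : Vdet) :
    zyc (indZ s t) c v = if v ∈ t c then 1 else 0 := rfl

end Infra
section Weak
variable {Vdet Vconf : Type*} [Fintype Vdet] [DecidableEq Vdet]
  [Fintype Vconf] [DecidableEq Vconf] (T : Tracking Vdet Vconf)

lemma obj_indicator_det (η : Cost Vdet Vconf) (u : Vdet) {s : DetS Vdet} (hs : s ∈ T.XDet u) :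
    η.det u * (if s.1 then (1:ℝ) else 0)
      + ∑ e ∈ T.In u, η.inn u e * (if e ∈ s.2.1 then (1:ℝ) else 0)
      + ∑ e ∈ T.Out u, η.out u e * (if e ∈ s.2.2 then (1:ℝ) else 0)
    = detCost η u s := by
  classical
  rw [Tracking.XDet, Finset.mem_filter] at hs
  obtain ⟨-, h1, h2, -, -⟩ := hs
  rw [detCost]
  congr 1
  · congr 1
    · rcases s.1 <;> simp
    · simp_rw [mul_ite, mul_one, mul_zero]
      rw [Finset.sum_ite_mem, Finset.inter_eq_right.mpr h1]
  · simp_rw [mul_ite, mul_one, mul_zero]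
    rw [Finset.sum_ite_mem, Finset.inter_eq_right.mpr h2]

lemma obj_indicator_conf (η : Cost Vdet Vconf) (c : Vconf) {s : Finset Vdet}
    (hs : s ∈ T.XConf c) :
    ∑ v ∈ T.membersOf c, η.conf c v * (if v ∈ s then (1:ℝ) else 0) = confCost η c s := by
  classical
  rw [Tracking.XConf, Finset.mem_filter] at hs
  obtain ⟨-, h1, -⟩ := hs
  have hsub : s ⊆ T.membersOf c := by
    intro v hv
    rw [Tracking.membersOf, Finset.mem_filter]
    exact ⟨Finset.mem_univ v, h1 v hv⟩
  rw [confCost]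
  simp_rw [mul_ite, mul_one, mul_zero]
  rw [Finset.sum_ite_mem, Finset.inter_eq_right.mpr hsub]

lemma card_sum_det {s : Finset (Edge Vdet)} {A : Finset (Edge Vdet)} (hsub : s ⊆ A) (b : Bool)
    (hcard : s.card ≤ if b then 1 else 0) :
    ∑ e ∈ A, (if e ∈ s then (1:ℝ) else 0) ≤ if b then 1 else 0 := by
  classical
  rw [Finset.sum_ite_mem, Finset.inter_eq_right.mpr hsub, Finset.sum_const, nsmul_eq_mul, mul_one]
  rcases b with _ | _ <;> simp at hcard ⊢ <;> exact_mod_cast hcard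

/-- Weak duality core: the dual value is at most the relaxed objective of any
fractional feasible assignment. -/
lemma weak_core (θ : Cost Vdet Vconf) (l : Repa Vdet Vconf)
    (xd : Vdet → ℝ) (xin xout : Vdet → Edge Vdet → ℝ) (yc : Vconf → Vdet → ℝ)
    (hb : ∀ u, 0 ≤ xd u ∧ xd u ≤ 1)
    (hbin : ∀ u, ∀ e ∈ T.In u, 0 ≤ xin u e ∧ xin u e ≤ 1)
    (hbout : ∀ u, ∀ e ∈ T.Out u, 0 ≤ xout u e ∧ xout u e ≤ 1)
    (hsin : ∀ u, ∑ e ∈ T.In u, xin u e ≤ xd u)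
    (hsout : ∀ u, ∑ e ∈ T.Out u, xout u e ≤ xd u)
    (hbyc : ∀ c, ∀ v ∈ T.membersOf c, 0 ≤ yc c v ∧ yc c v ≤ 1)
    (hsyc : ∀ c, ∑ v ∈ T.membersOf c, yc c v ≤ 1) :
    T.D θ l ≤
      (∑ u, ((T.repaCost θ l).det u * xd u + ∑ e ∈ T.In u, (T.repaCost θ l).inn u e * xin u e
          + ∑ e ∈ T.Out u, (T.repaCost θ l).out u e * xout u e)
        + ∑ c, ∑ v ∈ T.membersOf c, (T.repaCost θ l).conf c v * yc c v) := by
  rw [Tracking.D]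
  refine add_le_add (Finset.sum_le_sum fun u _ => ?_) (Finset.sum_le_sum fun c _ => ?_)
  · exact det_lower T (T.repaCost θ l) u (xd u) (xin u) (xout u) (hb u).1 (hb u).2
      (fun e he => (hbin u e he).1) (fun e he => (hbout u e he).1) (hsin u) (hsout u)
  · exact conf_lower T (T.repaCost θ l) c (yc c) (fun v hv => (hbyc c v hv).1) (hsyc c)

/-- Weak duality: with coupling, the residuals vanish. -/
lemma weak_duality (θ : Cost Vdet Vconf) (l : Repa Vdet Vconf)
    (xd : Vdet → ℝ) (xin xout : Vdet → Edge Vdet → ℝ) (yc : Vconf → Vdet → ℝ)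
    (hb : ∀ u, 0 ≤ xd u ∧ xd u ≤ 1)
    (hbin : ∀ u, ∀ e ∈ T.In u, 0 ≤ xin u e ∧ xin u e ≤ 1)
    (hbout : ∀ u, ∀ e ∈ T.Out u, 0 ≤ xout u e ∧ xout u e ≤ 1)
    (hsin : ∀ u, ∑ e ∈ T.In u, xin u e ≤ xd u)
    (hsout : ∀ u, ∑ e ∈ T.Out u, xout u e ≤ xd u)
    (hbyc : ∀ c, ∀ v ∈ T.membersOf c, 0 ≤ yc c v ∧ yc c v ≤ 1)
    (hsyc : ∀ c, ∑ v ∈ T.membersOf c, yc c v ≤ 1)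
    (hmove : ∀ m ∈ T.Emove, xout m.1 (Sum.inl m) = xin m.2 (Sum.inl m))
    (hdiv : ∀ d ∈ T.Ediv, xout d.1 (Sum.inr d) = xin d.2.1 (Sum.inr d) ∧
        xout d.1 (Sum.inr d) = xin d.2.2 (Sum.inr d))
    (hconf : ∀ e ∈ T.Econf, xd e.1 = yc e.2 e.1) :
    T.D θ l ≤
      ∑ u, (θ.det u * xd u + ∑ e ∈ T.In u, θ.inn u e * xin u e
          + ∑ e ∈ T.Out u, θ.out u e * xout u e)
        + ∑ c, ∑ v ∈ T.membersOf c, θ.conf c v * yc c v := by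
  have h := weak_core T θ l xd xin xout yc hb hbin hbout hsin hsout hbyc hsyc
  rw [decomp T θ l xd xin xout yc] at h
  have e1 : ∑ m ∈ T.Emove, l.1 m * (xin m.2 (Sum.inl m) - xout m.1 (Sum.inl m)) = 0 :=
    Finset.sum_eq_zero fun m hm => by rw [hmove m hm]; ring
  have e2 : ∑ d ∈ T.Ediv, ((l.2.1 d).1 * (xin d.2.1 (Sum.inr d) - xout d.1 (Sum.inr d))
      + (l.2.1 d).2 * (xin d.2.2 (Sum.inr d) - xout d.1 (Sum.inr d))) = 0 :=
    Finset.sum_eq_zero fun d hd => by rw [← (hdiv d hd).1, ← (hdiv d hd).2]; ring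
  have e3 : ∑ e ∈ T.Econf, l.2.2 e * (yc e.2 e.1 - xd e.1) = 0 :=
    Finset.sum_eq_zero fun e he => by rw [hconf e he]; ring
  rw [e1, e2, e3] at h
  linarith
end Weak
section MainAux
variable {Vdet Vconf : Type*} [Fintype Vdet] [DecidableEq Vdet]
  [Fintype Vconf] [DecidableEq Vconf] (T : Tracking Vdet Vconf)

lemma Amap_apply (z : NIdx Vdet Vconf → ℝ) (i : IIdx Vdet Vconf) :
    Amap T z i = Afun T z i := rfl

lemma cmap_apply (θ : Cost Vdet Vconf) (z : NIdx Vdet Vconf → ℝ) :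
    cmap T θ z = cfun T θ z := rfl

lemma indZ_mem_Cset {s : Vdet → DetS Vdet} {t : Vconf → Finset Vdet}
    (hs : ∀ u, s u ∈ T.XDet u) (ht : ∀ c, t c ∈ T.XConf c) :
    indZ s t ∈ Cset T := by
  classical
  have hX : ∀ u, (s u).2.1 ⊆ T.In u ∧ (s u).2.2 ⊆ T.Out u ∧
      (s u).2.1.card ≤ (if (s u).1 then 1 else 0) ∧
      (s u).2.2.card ≤ (if (s u).1 then 1 else 0) := by
    intro u
    have h := hs u
    rw [Tracking.XDet, Finset.mem_filter] at h
    simpa using h.2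

  refine ⟨fun i => ?_, fun u => ?_, fun u => ?_, fun c => ?_⟩
  · rcases i with u | p | p | q <;> simp only [indZ] <;> split_ifs <;> norm_num
  · have h := hX u
    have : ∀ e ∈ T.In u, zin (Vconf := Vconf) (indZ s t) u e
        = if e ∈ (s u).2.1 then (1:ℝ) else 0 := fun e _ => rfl
    rw [Finset.sum_congr rfl this, zd_indZ]
    exact card_sum_det h.1 _ (by simpa using h.2.2.1)
  · have h := hX u
    have : ∀ e ∈ T.Out u, zout (Vconf := Vconf) (indZ s t) u e
        = if e ∈ (s u).2.2 then (1:ℝ) else 0 := fun e _ => rfl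
    rw [Finset.sum_congr rfl this, zd_indZ]
    exact card_sum_det h.2.1 _ (by simpa using h.2.2.2)
  · have h := ht c
    rw [Tracking.XConf, Finset.mem_filter] at h
    have hsub : t c ⊆ T.membersOf c := by
      intro v hv
      rw [Tracking.membersOf, Finset.mem_filter]
      exact ⟨Finset.mem_univ v, h.2.1 v hv⟩
    have : ∀ v ∈ T.membersOf c, zyc (indZ s t) c v = if v ∈ t c then (1:ℝ) else 0 :=
      fun v _ => rfl
    rw [Finset.sum_congr rfl this, Finset.sum_ite_mem, Finset.inter_eq_right.mpr hsub,
      Finset.sum_const, nsmul_eq_mul, mul_one]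
    exact_mod_cast h.2.2

lemma sum_lam_A (lam : IIdx Vdet Vconf → ℝ) (z : NIdx Vdet Vconf → ℝ) :
    ∑ i, lam i * Amap T z i =
      ∑ m ∈ T.Emove, lam (Sum.inl m) * (zin z m.2 (Sum.inl m) - zout z m.1 (Sum.inl m))
      + ∑ d ∈ T.Ediv,
          (lam (Sum.inr (Sum.inl d)) * (zin z d.2.1 (Sum.inr d) - zout z d.1 (Sum.inr d))
            + lam (Sum.inr (Sum.inr (Sum.inl d)))
              * (zin z d.2.2 (Sum.inr d) - zout z d.1 (Sum.inr d)))
      + ∑ e ∈ T.Econf, lam (Sum.inr (Sum.inr (Sum.inr e))) * (zyc z e.2 e.1 - zd z e.1) := by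
  classical
  simp_rw [Amap_apply]
  rw [Fintype.sum_sum_type, Fintype.sum_sum_type, Fintype.sum_sum_type]
  have h1 : ∑ m : Vdet × Vdet, lam (Sum.inl m) * Afun T z (Sum.inl m)
      = ∑ m ∈ T.Emove, lam (Sum.inl m) * (zin z m.2 (Sum.inl m) - zout z m.1 (Sum.inl m)) := by
    have : ∀ m : Vdet × Vdet, lam (Sum.inl m) * Afun T z (Sum.inl m)
        = if m ∈ T.Emove then
            lam (Sum.inl m) * (zin z m.2 (Sum.inl m) - zout z m.1 (Sum.inl m)) else 0 := by
      intro m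
      simp only [Afun]
      split_ifs <;> ring
    simp_rw [this]
    rw [Finset.sum_ite_mem, Finset.univ_inter]
  have h2 : ∑ d : Vdet × Vdet × Vdet, lam (Sum.inr (Sum.inl d)) * Afun T z (Sum.inr (Sum.inl d))
      = ∑ d ∈ T.Ediv,
          lam (Sum.inr (Sum.inl d)) * (zin z d.2.1 (Sum.inr d) - zout z d.1 (Sum.inr d)) := by
    have : ∀ d : Vdet × Vdet × Vdet,
        lam (Sum.inr (Sum.inl d)) * Afun T z (Sum.inr (Sum.inl d))
        = if d ∈ T.Ediv then
            lam (Sum.inr (Sum.inl d)) * (zin z d.2.1 (Sum.inr d) - zout z d.1 (Sum.inr d))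
          else 0 := by
      intro d
      simp only [Afun]
      split_ifs <;> ring
    simp_rw [this]
    rw [Finset.sum_ite_mem, Finset.univ_inter]
  have h3 : ∑ d : Vdet × Vdet × Vdet,
        lam (Sum.inr (Sum.inr (Sum.inl d))) * Afun T z (Sum.inr (Sum.inr (Sum.inl d)))
      = ∑ d ∈ T.Ediv, lam (Sum.inr (Sum.inr (Sum.inl d)))
          * (zin z d.2.2 (Sum.inr d) - zout z d.1 (Sum.inr d)) := by
    have : ∀ d : Vdet × Vdet × Vdet,
        lam (Sum.inr (Sum.inr (Sum.inl d))) * Afun T z (Sum.inr (Sum.inr (Sum.inl d)))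
        = if d ∈ T.Ediv then lam (Sum.inr (Sum.inr (Sum.inl d)))
            * (zin z d.2.2 (Sum.inr d) - zout z d.1 (Sum.inr d)) else 0 := by
      intro d
      simp only [Afun]
      split_ifs <;> ring
    simp_rw [this]
    rw [Finset.sum_ite_mem, Finset.univ_inter]
  have h4 : ∑ e : Vdet × Vconf,
        lam (Sum.inr (Sum.inr (Sum.inr e))) * Afun T z (Sum.inr (Sum.inr (Sum.inr e)))
      = ∑ e ∈ T.Econf, lam (Sum.inr (Sum.inr (Sum.inr e))) * (zyc z e.2 e.1 - zd z e.1) := by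
    have : ∀ e : Vdet × Vconf,
        lam (Sum.inr (Sum.inr (Sum.inr e))) * Afun T z (Sum.inr (Sum.inr (Sum.inr e)))
        = if e ∈ T.Econf then
            lam (Sum.inr (Sum.inr (Sum.inr e))) * (zyc z e.2 e.1 - zd z e.1) else 0 := by
      intro e
      simp only [Afun]
      split_ifs <;> ring
    simp_rw [this]
    rw [Finset.sum_ite_mem, Finset.univ_inter]
  rw [h1, h2, h3, h4, Finset.sum_add_distrib]
  ring
end MainAux

/-- The Lagrange dual is exactly as tight as the natural LP relaxation:
`sup_{λ∈Λ} D(λ)` equals the minimum of `E(θ, ·)` over all relaxed (fractional) assignments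
satisfying the local constraints and all coupling constraints. -/
theorem dual_eq_lp_relaxation {Vdet Vconf : Type*} [Fintype Vdet] [DecidableEq Vdet]
    [Fintype Vconf] [DecidableEq Vconf] (T : Tracking Vdet Vconf) (θ : Cost Vdet Vconf) :
    (⨆ l : Repa Vdet Vconf, T.D θ l) =
      sInf { r : ℝ |
        ∃ (xd : Vdet → ℝ) (xin xout : Vdet → Edge Vdet → ℝ) (yc : Vconf → Vdet → ℝ),
          (∀ u, 0 ≤ xd u ∧ xd u ≤ 1) ∧
          (∀ u, ∀ e ∈ T.In u, 0 ≤ xin u e ∧ xin u e ≤ 1) ∧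
          (∀ u, ∀ e ∈ T.Out u, 0 ≤ xout u e ∧ xout u e ≤ 1) ∧
          (∀ u, ∑ e ∈ T.In u, xin u e ≤ xd u) ∧
          (∀ u, ∑ e ∈ T.Out u, xout u e ≤ xd u) ∧
          (∀ c, ∀ v ∈ T.membersOf c, 0 ≤ yc c v ∧ yc c v ≤ 1) ∧
          (∀ c, ∑ v ∈ T.membersOf c, yc c v ≤ 1) ∧
          (∀ m ∈ T.Emove, xout m.1 (Sum.inl m) = xin m.2 (Sum.inl m)) ∧
          (∀ d ∈ T.Ediv, xout d.1 (Sum.inr d) = xin d.2.1 (Sum.inr d) ∧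
            xout d.1 (Sum.inr d) = xin d.2.2 (Sum.inr d)) ∧
          (∀ e ∈ T.Econf, xd e.1 = yc e.2 e.1) ∧
          r = ∑ u, (θ.det u * xd u + ∑ e ∈ T.In u, θ.inn u e * xin u e
                + ∑ e ∈ T.Out u, θ.out u e * xout u e)
              + ∑ c, ∑ v ∈ T.membersOf c, θ.conf c v * yc c v } := by
  classical
  set S : Set ℝ := { r : ℝ |
        ∃ (xd : Vdet → ℝ) (xin xout : Vdet → Edge Vdet → ℝ) (yc : Vconf → Vdet → ℝ),
          (∀ u, 0 ≤ xd u ∧ xd u ≤ 1) ∧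
          (∀ u, ∀ e ∈ T.In u, 0 ≤ xin u e ∧ xin u e ≤ 1) ∧
          (∀ u, ∀ e ∈ T.Out u, 0 ≤ xout u e ∧ xout u e ≤ 1) ∧
          (∀ u, ∑ e ∈ T.In u, xin u e ≤ xd u) ∧
          (∀ u, ∑ e ∈ T.Out u, xout u e ≤ xd u) ∧
          (∀ c, ∀ v ∈ T.membersOf c, 0 ≤ yc c v ∧ yc c v ≤ 1) ∧
          (∀ c, ∑ v ∈ T.membersOf c, yc c v ≤ 1) ∧
          (∀ m ∈ T.Emove, xout m.1 (Sum.inl m) = xin m.2 (Sum.inl m)) ∧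
          (∀ d ∈ T.Ediv, xout d.1 (Sum.inr d) = xin d.2.1 (Sum.inr d) ∧
            xout d.1 (Sum.inr d) = xin d.2.2 (Sum.inr d)) ∧
          (∀ e ∈ T.Econf, xd e.1 = yc e.2 e.1) ∧
          r = ∑ u, (θ.det u * xd u + ∑ e ∈ T.In u, θ.inn u e * xin u e
                + ∑ e ∈ T.Out u, θ.out u e * xout u e)
              + ∑ c, ∑ v ∈ T.membersOf c, θ.conf c v * yc c v } with hSdef
  have h0S : (0 : ℝ) ∈ S := by
    refine ⟨fun _ => 0, fun _ _ => 0, fun _ _ => 0, fun _ _ => 0, ?_, ?_, ?_, ?_, ?_, ?_, ?_,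
      ?_, ?_, ?_, ?_⟩ <;> simp
  have hweakS : ∀ (l : Repa Vdet Vconf), ∀ r ∈ S, T.D θ l ≤ r := by
    rintro l r ⟨xd, xin, xout, yc, h1, h2, h3, h4, h5, h6, h7, h8, h9, h10, h11⟩
    rw [h11]
    exact weak_duality T θ l xd xin xout yc h1 h2 h3 h4 h5 h6 h7 h8 h9 h10
  have hbddS : BddBelow S :=
    ⟨T.D θ (fun _ => 0, fun _ => (0, 0), fun _ => 0),
      fun r hr => hweakS (fun _ => 0, fun _ => (0, 0), fun _ => 0) r hr⟩
  have hDleP : ∀ l : Repa Vdet Vconf, T.D θ l ≤ sInf S := fun l =>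
    le_csInf ⟨0, h0S⟩ (fun r hr => hweakS l r hr)
  have hbddD : BddAbove (Set.range fun l : Repa Vdet Vconf => T.D θ l) :=
    ⟨sInf S, by rintro _ ⟨l, rfl⟩; exact hDleP l⟩
  refine le_antisymm (ciSup_le hDleP) ?_
  refine le_of_forall_pos_le_add fun ε hε => ?_
  -- strong duality step
  have hp : ∀ z ∈ Cset T, Amap T z = 0 → sInf S ≤ cmap T θ z := by
    intro z hz hA
    obtain ⟨hz1, hz2, hz3, hz4⟩ := hz
    refine csInf_le hbddS ?_
    refine ⟨zd z, zin z, zout z, zyc z, fun u => hz1 (Sum.inl u),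
      fun u e _ => hz1 (Sum.inr (Sum.inl (u, e))),
      fun u e _ => hz1 (Sum.inr (Sum.inr (Sum.inl (u, e)))),
      hz2, hz3, fun c v _ => hz1 (Sum.inr (Sum.inr (Sum.inr (c, v)))), hz4, ?_, ?_, ?_, rfl⟩
    · intro m hm
      have h := congrFun hA (Sum.inl m)
      rw [Amap_apply] at h
      simp only [Afun, if_pos hm, Pi.zero_apply] at h
      linarith
    · intro d hd
      have h1 := congrFun hA (Sum.inr (Sum.inl d))
      have h2 := congrFun hA (Sum.inr (Sum.inr (Sum.inl d)))
      rw [Amap_apply] at h1 h2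
      simp only [Afun, if_pos hd, Pi.zero_apply] at h1 h2
      constructor <;> linarith
    · intro e he
      have h := congrFun hA (Sum.inr (Sum.inr (Sum.inr e)))
      rw [Amap_apply] at h
      simp only [Afun, if_pos he, Pi.zero_apply] at h
      linarith
  obtain ⟨lam, hlam⟩ := abstract_duality (Cset T) (isCompact_Cset T) (convex_Cset T)
    (Amap T) (cmap T θ) (zero_mem_Cset T) (map_zero _) (sInf S) hp hε
  set l : Repa Vdet Vconf :=
    (fun m => lam (Sum.inl m),
      fun d => (lam (Sum.inr (Sum.inl d)), lam (Sum.inr (Sum.inr (Sum.inl d)))),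
      fun e => lam (Sum.inr (Sum.inr (Sum.inr e)))) with hldef
  choose s hsmem hseq using fun u =>
    Finset.exists_mem_eq_inf' (T.XDet_nonempty u) (detCost (T.repaCost θ l) u)
  choose t htmem hteq using fun c =>
    Finset.exists_mem_eq_inf' (T.XConf_nonempty c) (confCost (T.repaCost θ l) c)
  have hzC : indZ s t ∈ Cset T := indZ_mem_Cset T hsmem htmem
  have hkey := hlam (indZ s t) hzC
  have hbridge : cmap T θ (indZ s t) + ∑ i, lam i * Amap T (indZ s t) i
      = ∑ u, ((T.repaCost θ l).det u * zd (indZ s t) u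
          + ∑ e ∈ T.In u, (T.repaCost θ l).inn u e * zin (indZ s t) u e
          + ∑ e ∈ T.Out u, (T.repaCost θ l).out u e * zout (indZ s t) u e)
        + ∑ c, ∑ v ∈ T.membersOf c, (T.repaCost θ l).conf c v * zyc (indZ s t) c v := by
    rw [sum_lam_A]
    exact (decomp T θ l (zd (indZ s t)) (fun u => zin (indZ s t) u)
      (fun u => zout (indZ s t) u) (fun c => zyc (indZ s t) c)).symm
  have hobj : (∑ u, ((T.repaCost θ l).det u * zd (indZ s t) u
          + ∑ e ∈ T.In u, (T.repaCost θ l).inn u e * zin (indZ s t) u e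
          + ∑ e ∈ T.Out u, (T.repaCost θ l).out u e * zout (indZ s t) u e)
        + ∑ c, ∑ v ∈ T.membersOf c, (T.repaCost θ l).conf c v * zyc (indZ s t) c v)
      = T.D θ l := by
    rw [Tracking.D]
    congr 1
    · refine Finset.sum_congr rfl fun u _ => ?_
      rw [hseq u]
      exact obj_indicator_det T (T.repaCost θ l) u (hsmem u)
    · refine Finset.sum_congr rfl fun c _ => ?_
      rw [hteq c]
      exact obj_indicator_conf T (T.repaCost θ l) c (htmem c)
  rw [hbridge, hobj] at hkey
  have hle : T.D θ l ≤ ⨆ l' : Repa Vdet Vconf, T.D θ l' := le_ciSup hbddD l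
  linarith
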